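/- Fix d ≥ 2 and work on ℝ^{2d+1} with coordinates (x₁,…,x_d, y₁,…,y_d, t). For 1 ≤ i ≤ d let X_i = ∂_{x_i} + 2y_i ∂_t and Y_i = ∂_{y_i} − 2x_i ∂_t, and order the ℓ = 2d vector fields as V₁ = X₁, …, V_d = X_d, V_{d+1} = Y₁, …, V_{2d} = Y_d. Set m = ℓ(ℓ+1)/2 = d(2d+1). Then for every integer c ≥ 1 and every choice of points p₁, …, p_c ∈ ℝ^{2d+1}, the family of m vectors in ℝ^{c(2d+1)} consisting of the stacked evaluations (V_i(p₁), …, V_i(p_c)) for 1 ≤ i ≤ ℓ and ([V_j,V_k](p₁), …, [V_j,V_k](p_c)) for 1 ≤ j < k ≤ ℓ is linearly dependent; equivalently, the c(2d+1) × m reconstruction matrix with these columns has rank strictly less than m. -/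

import Mathlib

/-- The Lie bracket of two vector fields on a normed space,
`[V,W](x) = DW(x)(V(x)) − DV(x)(W(x))`. -/
noncomputable def lieBracket {E : Type*} [NormedAddCommGroup E] [NormedSpace ℝ E]
    (V W : E → E) : E → E :=
  fun x => fderiv ℝ W x (V x) - fderiv ℝ V x (W x)

private lemma fderiv_affine' (n : ℕ) (j t : Fin n) (e₀ : EuclideanSpace ℝ (Fin n)) (s : ℝ)
    (x : EuclideanSpace ℝ (Fin n)) :
    fderiv ℝ (fun p : EuclideanSpace ℝ (Fin n) =>
        e₀ + (s * p j) • EuclideanSpace.single t (1:ℝ)) x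
    = (s • (EuclideanSpace.proj j : EuclideanSpace ℝ (Fin n) →L[ℝ] ℝ)).smulRight
        (EuclideanSpace.single t 1) := by
  have h : (fun p : EuclideanSpace ℝ (Fin n) =>
        e₀ + (s * p j) • EuclideanSpace.single t (1:ℝ))
      = fun p => e₀ + ((s • (EuclideanSpace.proj j : EuclideanSpace ℝ (Fin n) →L[ℝ] ℝ)).smulRight
        (EuclideanSpace.single t 1)) p := by
    funext p
    simp [ContinuousLinearMap.smulRight_apply, smul_smul]
  rw [h, fderiv_const_add, ContinuousLinearMap.fderiv]

private lemma bracket_XY' (n : ℕ) (ii di tt : Fin n) (hit : ii ≠ tt) (hdt : di ≠ tt)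
    (p : EuclideanSpace ℝ (Fin n)) :
    lieBracket
      (fun q : EuclideanSpace ℝ (Fin n) =>
        EuclideanSpace.single ii (1:ℝ) + (2 * q di) • EuclideanSpace.single tt (1:ℝ))
      (fun q : EuclideanSpace ℝ (Fin n) =>
        EuclideanSpace.single di (1:ℝ) - (2 * q ii) • EuclideanSpace.single tt (1:ℝ)) p
    = (-4 : ℝ) • EuclideanSpace.single tt (1:ℝ) := by
  have hW : (fun q : EuclideanSpace ℝ (Fin n) =>
        EuclideanSpace.single di (1:ℝ) - (2 * q ii) • EuclideanSpace.single tt (1:ℝ))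
      = fun q : EuclideanSpace ℝ (Fin n) =>
        EuclideanSpace.single di (1:ℝ) + ((-2) * q ii) • EuclideanSpace.single tt (1:ℝ) := by
    funext q
    rw [sub_eq_add_neg, neg_mul, neg_smul]
  simp only [lieBracket, hW, fderiv_affine']
  simp [ContinuousLinearMap.smulRight_apply, EuclideanSpace.single_apply, hit, hdt]
  module

theorem heisenberg_reconstruction_degenerate
    (d : ℕ) (hd : 2 ≤ d)
    (X Y : Fin d → EuclideanSpace ℝ (Fin (2 * d + 1)) → EuclideanSpace ℝ (Fin (2 * d + 1)))
    (hX : ∀ (i : Fin d) (p : EuclideanSpace ℝ (Fin (2 * d + 1))),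
      X i p = EuclideanSpace.single (⟨i.val, by have := i.2; omega⟩ : Fin (2 * d + 1)) (1:ℝ)
        + (2 * p ⟨d + i.val, by have := i.2; omega⟩) •
            EuclideanSpace.single (⟨2 * d, by omega⟩ : Fin (2 * d + 1)) (1:ℝ))
    (hY : ∀ (i : Fin d) (p : EuclideanSpace ℝ (Fin (2 * d + 1))),
      Y i p = EuclideanSpace.single (⟨d + i.val, by have := i.2; omega⟩ : Fin (2 * d + 1)) (1:ℝ)
        - (2 * p ⟨i.val, by have := i.2; omega⟩) •
            EuclideanSpace.single (⟨2 * d, by omega⟩ : Fin (2 * d + 1)) (1:ℝ))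
    (V : Fin (2 * d) → EuclideanSpace ℝ (Fin (2 * d + 1)) → EuclideanSpace ℝ (Fin (2 * d + 1)))
    (hV : ∀ k : Fin (2 * d),
      V k = if h : (k : ℕ) < d then X ⟨k, h⟩ else Y ⟨(k : ℕ) - d, by have := k.2; omega⟩)
    (c : ℕ) (hc : 1 ≤ c)
    (pts : Fin c → EuclideanSpace ℝ (Fin (2 * d + 1))) :
    ¬ LinearIndependent ℝ
        (Sum.elim
          (fun i : Fin (2 * d) => fun a : Fin c => V i (pts a))
          (fun jk : {q : Fin (2 * d) × Fin (2 * d) // q.1 < q.2} =>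
            fun a : Fin c => lieBracket (V jk.1.1) (V jk.1.2) (pts a))) := by
  intro h
  -- indices
  have h0 : (0 : ℕ) < 2 * d := by omega
  have h1 : (1 : ℕ) < 2 * d := by omega
  have h2 : d < 2 * d := by omega
  have h3 : d + 1 < 2 * d := by omega
  set a1 : Fin (2 * d) := ⟨0, h0⟩
  set a2 : Fin (2 * d) := ⟨d, h2⟩
  set b1 : Fin (2 * d) := ⟨1, h1⟩
  set b2 : Fin (2 * d) := ⟨d + 1, h3⟩
  set ii0 : Fin (2 * d + 1) := ⟨0, by omega⟩
  set di0 : Fin (2 * d + 1) := ⟨d, by omega⟩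
  set ii1 : Fin (2 * d + 1) := ⟨1, by omega⟩
  set di1 : Fin (2 * d + 1) := ⟨d + 1, by omega⟩
  set tt : Fin (2 * d + 1) := ⟨2 * d, by omega⟩
  have hVa1 : V a1 = fun q : EuclideanSpace ℝ (Fin (2 * d + 1)) =>
      EuclideanSpace.single ii0 (1:ℝ) + (2 * q di0) • EuclideanSpace.single tt (1:ℝ) := by
    funext q
    rw [hV, dif_pos (show ((a1 : ℕ) : ℕ) < d by simp [a1]; omega), hX]
    simp [a1, ii0, di0, tt]
  have hVa2 : V a2 = fun q : EuclideanSpace ℝ (Fin (2 * d + 1)) =>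
      EuclideanSpace.single di0 (1:ℝ) - (2 * q ii0) • EuclideanSpace.single tt (1:ℝ) := by
    funext q
    rw [hV, dif_neg (show ¬ ((a2 : ℕ) < d) by simp [a2]), hY]
    simp [a2, ii0, di0, tt]
  have hVb1 : V b1 = fun q : EuclideanSpace ℝ (Fin (2 * d + 1)) =>
      EuclideanSpace.single ii1 (1:ℝ) + (2 * q di1) • EuclideanSpace.single tt (1:ℝ) := by
    funext q
    rw [hV, dif_pos (show ((b1 : ℕ)) < d by simp [b1]; omega), hX]
  have hVb2 : V b2 = fun q : EuclideanSpace ℝ (Fin (2 * d + 1)) =>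
      EuclideanSpace.single di1 (1:ℝ) - (2 * q ii1) • EuclideanSpace.single tt (1:ℝ) := by
    funext q
    rw [hV, dif_neg (show ¬ ((b2 : ℕ) < d) by simp [b2]), hY]
    simp [b2, ii1, di1, tt]
  have hA : a1 < a2 := by simp [a1, a2, Fin.lt_def]; omega
  have hB : b1 < b2 := by simp [b1, b2, Fin.lt_def]; omega
  set idxA : {q : Fin (2 * d) × Fin (2 * d) // q.1 < q.2} := ⟨(a1, a2), hA⟩
  set idxB : {q : Fin (2 * d) × Fin (2 * d) // q.1 < q.2} := ⟨(b1, b2), hB⟩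
  have key : (Sum.elim
          (fun i : Fin (2 * d) => fun a : Fin c => V i (pts a))
          (fun jk : {q : Fin (2 * d) × Fin (2 * d) // q.1 < q.2} =>
            fun a : Fin c => lieBracket (V jk.1.1) (V jk.1.2) (pts a))) (Sum.inr idxA)
      = (Sum.elim
          (fun i : Fin (2 * d) => fun a : Fin c => V i (pts a))
          (fun jk : {q : Fin (2 * d) × Fin (2 * d) // q.1 < q.2} =>
            fun a : Fin c => lieBracket (V jk.1.1) (V jk.1.2) (pts a))) (Sum.inr idxB) := by
    simp only [Sum.elim_inr]
    funext a
    have hit0 : ii0 ≠ tt := by simp [ii0, tt, Fin.ext_iff]; omega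
    have hdt0 : di0 ≠ tt := by simp [di0, tt, Fin.ext_iff]; omega
    have hit1 : ii1 ≠ tt := by simp [ii1, tt, Fin.ext_iff]; omega
    have hdt1 : di1 ≠ tt := by simp [di1, tt, Fin.ext_iff]; omega
    show lieBracket (V a1) (V a2) (pts a) = lieBracket (V b1) (V b2) (pts a)
    rw [hVa1, hVa2, hVb1, hVb2,
      bracket_XY' _ ii0 di0 tt hit0 hdt0, bracket_XY' _ ii1 di1 tt hit1 hdt1]
  have hne : (Sum.inr idxA : (Fin (2 * d)) ⊕ {q : Fin (2 * d) × Fin (2 * d) // q.1 < q.2})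
      ≠ Sum.inr idxB := by
    simp [idxA, idxB, Subtype.ext_iff, Prod.ext_iff, Fin.ext_iff, a1, b1]
  exact hne (h.injective key)
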